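/- Let K ≥ 1, L > 0, and let (Z_k^n)_{n∈[K],k∈[K]} be jointly distributed finitely-valued random variables such that for every n ∈ [K] the family (Z_1^n, …, Z_K^n) is (K,n)-MDS with symbol size L. Write Z_k^{≤n} = (Z_k^1, …, Z_k^n). Then for every n ∈ [K] and every subset U ⊆ [K] with |U| = n: (1/n)·Σ_{k∈U} H(Z_k^{≤n}) ≥ (1 + 1/2 + ⋯ + 1/n)·L. -/

import Mathlib

open scoped BigOperators

open Classical in
/-- The probability that the finitely-valued random variable `X` takes the value `s`,
under the probability weights `μ` on the finite sample space `Ω`. -/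
noncomputable def probOf {Ω S : Type*} [Fintype Ω] (μ : Ω → ℝ) (X : Ω → S) (s : S) : ℝ :=
  ∑ ω ∈ Finset.univ.filter (fun ω => X ω = s), μ ω

/-- Shannon entropy (in bits) of a finitely-valued random variable. -/
noncomputable def Hent {Ω S : Type*} [Fintype Ω] [Fintype S] (μ : Ω → ℝ) (X : Ω → S) : ℝ :=
  - ∑ s : S, probOf μ X s * Real.logb 2 (probOf μ X s)

/-- Conditional entropy H(X | Y) (in bits). -/
noncomputable def Hcond {Ω S T : Type*} [Fintype Ω] [Fintype S] [Fintype T]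
    (μ : Ω → ℝ) (X : Ω → S) (Y : Ω → T) : ℝ :=
  Hent μ (fun ω => (X ω, Y ω)) - Hent μ Y

/-- Mutual information I(X ; Y) (in bits). -/
noncomputable def MI {Ω S T : Type*} [Fintype Ω] [Fintype S] [Fintype T]
    (μ : Ω → ℝ) (X : Ω → S) (Y : Ω → T) : ℝ :=
  Hent μ X + Hent μ Y - Hent μ (fun ω => (X ω, Y ω))

/-- Conditional mutual information I(X ; Y | Z) (in bits). -/
noncomputable def CMI {Ω S T U : Type*} [Fintype Ω] [Fintype S] [Fintype T] [Fintype U]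
    (μ : Ω → ℝ) (X : Ω → S) (Y : Ω → T) (Z : Ω → U) : ℝ :=
  Hcond μ X Z - Hcond μ X (fun ω => (Y ω, Z ω))

/-- `Zle ZM n k` is the tuple `Z_k^{≤ n} = (Z_k^1, …, Z_k^n)` (0-indexed: levels `0,…,n`). -/
def Zle {Ω T : Type*} {K : ℕ} (ZM : Fin K → Fin K → Ω → T) (n k : Fin K) :
    Ω → (Fin (n.1 + 1) → T) :=
  fun ω m => ZM (Fin.castLE n.isLt m) k ω

section Analytic
variable {Ω : Type} [Fintype Ω] {μ : Ω → ℝ}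

lemma probOf_nonneg (h0 : ∀ ω, 0 ≤ μ ω) {S : Type*} (X : Ω → S) (s : S) :
    0 ≤ probOf μ X s :=
  Finset.sum_nonneg fun ω _ => h0 ω

lemma le_probOf (h0 : ∀ ω, 0 ≤ μ ω) {S : Type*} (X : Ω → S) (ω : Ω) :
    μ ω ≤ probOf μ X (X ω) := by
  classical
  refine Finset.single_le_sum (fun i _ => h0 i) ?_
  simp [probOf]

/-- subset comparison of probabilities: if `X ω' = X ω` always follows from `Y ω' = Y ω`,
then `probOf Y (Y ω) ≤ probOf X (X ω)`. -/
lemma probOf_le_probOf (h0 : ∀ ω, 0 ≤ μ ω) {S T : Type*} (X : Ω → S) (Y : Ω → T)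
    (f : T → S) (hf : ∀ ω, X ω = f (Y ω)) (ω : Ω) :
    probOf μ Y (Y ω) ≤ probOf μ X (X ω) := by
  classical
  refine Finset.sum_le_sum_of_subset_of_nonneg ?_ (fun i _ _ => h0 i)
  intro ω' hω'
  simp only [Finset.mem_filter, Finset.mem_univ, true_and] at hω' ⊢
  rw [hf, hf, hω']

/-- Pushforward-weighted sums: `∑ ω, μ ω * g (X ω) = ∑ s, probOf μ X s * g s`. -/
lemma sum_fiber_weight {S : Type*} [Fintype S] (X : Ω → S) (g : S → ℝ) :
    ∑ ω, μ ω * g (X ω) = ∑ s, probOf μ X s * g s := by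
  classical
  rw [← Finset.sum_fiberwise Finset.univ X (fun ω => μ ω * g (X ω))]
  refine Finset.sum_congr rfl fun s _ => ?_
  rw [probOf, Finset.sum_mul]
  refine Finset.sum_congr (by ext ω; simp) fun ω hω => ?_
  simp only [Finset.mem_filter] at hω
  rw [hω.2]

lemma sum_probOf (h1 : (∑ ω, μ ω) = 1) {S : Type*} [Fintype S] (X : Ω → S) :
    ∑ s, probOf μ X s = 1 := by
  have := sum_fiber_weight (μ := μ) X (fun _ => (1:ℝ))
  simpa [h1] using this.symm

lemma Hent_pointwise {S : Type*} [Fintype S] (X : Ω → S) :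
    Hent μ X = - ∑ ω, μ ω * Real.logb 2 (probOf μ X (X ω)) := by
  rw [Hent, sum_fiber_weight X (fun s => Real.logb 2 (probOf μ X s))]

lemma Hent_le_of_comap (h0 : ∀ ω, 0 ≤ μ ω) {S T : Type*} [Fintype S] [Fintype T]
    (X : Ω → S) (Y : Ω → T) (f : T → S) (hf : ∀ ω, X ω = f (Y ω)) :
    Hent μ X ≤ Hent μ Y := by
  rw [Hent_pointwise X, Hent_pointwise Y, neg_le_neg_iff]
  refine Finset.sum_le_sum fun ω _ => ?_
  rcases eq_or_lt_of_le (h0 ω) with h | h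
  · rw [← h]; simp
  · refine mul_le_mul_of_nonneg_left ?_ h.le
    have hY : 0 < probOf μ Y (Y ω) := lt_of_lt_of_le h (le_probOf h0 Y ω)
    have hX : 0 < probOf μ X (X ω) := lt_of_lt_of_le h (le_probOf h0 X ω)
    exact (Real.logb_le_logb one_lt_two hY hX).mpr (probOf_le_probOf h0 X Y f hf ω)

lemma Hent_congr (h0 : ∀ ω, 0 ≤ μ ω) {S T : Type*} [Fintype S] [Fintype T]
    (X : Ω → S) (Y : Ω → T) (f : T → S) (g : S → T)
    (hf : ∀ ω, X ω = f (Y ω)) (hg : ∀ ω, Y ω = g (X ω)) :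
    Hent μ X = Hent μ Y :=
  le_antisymm (Hent_le_of_comap h0 X Y f hf) (Hent_le_of_comap h0 Y X g hg)

end Analytic

section Submod
variable {Ω : Type} [Fintype Ω] {μ : Ω → ℝ}

/-- point version of probability comparison. -/
lemma probOf_point_mono (h0 : ∀ ω, 0 ≤ μ ω) {S T : Type*} (X : Ω → S) (Y : Ω → T)
    (f : T → S) (hf : ∀ ω, X ω = f (Y ω)) (t : T) :
    probOf μ Y t ≤ probOf μ X (f t) := by
  classical
  refine Finset.sum_le_sum_of_subset_of_nonneg ?_ (fun i _ _ => h0 i)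
  intro ω' hω'
  simp only [Finset.mem_filter, Finset.mem_univ, true_and] at hω' ⊢
  rw [hf, hω']

lemma sum_probOf_fst {S T : Type*} [Fintype S] (X : Ω → S) (Y : Ω → T) (t : T) :
    ∑ s, probOf μ (fun ω => (X ω, Y ω)) (s, t) = probOf μ Y t := by
  classical
  rw [probOf, ← Finset.sum_fiberwise (Finset.univ.filter (fun ω => Y ω = t)) X μ]
  refine Finset.sum_congr rfl fun s _ => ?_
  refine Finset.sum_congr ?_ (fun _ _ => rfl)
  ext ω
  simp [probOf, Prod.ext_iff, and_comm]

lemma Hent_submod (h0 : ∀ ω, 0 ≤ μ ω) (h1 : (∑ ω, μ ω) = 1)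
    {A B C : Type*} [Fintype A] [Fintype B] [Fintype C]
    (X : Ω → A) (Y : Ω → B) (Z : Ω → C) :
    Hent μ (fun ω => (X ω, Y ω, Z ω)) + Hent μ Z
      ≤ Hent μ (fun ω => (X ω, Z ω)) + Hent μ (fun ω => (Y ω, Z ω)) := by
  classical
  set W : Ω → A × B × C := fun ω => (X ω, Y ω, Z ω) with hW
  set p1 : A × B × C → ℝ := fun s => probOf μ (fun ω => (X ω, Z ω)) (s.1, s.2.2) with hp1
  set p2 : A × B × C → ℝ := fun s => probOf μ (fun ω => (Y ω, Z ω)) (s.2.1, s.2.2) with hp2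
  set p3 : A × B × C → ℝ := fun s => probOf μ W s with hp3
  set p4 : A × B × C → ℝ := fun s => probOf μ Z s.2.2 with hp4
  -- rewrite all entropies as sums over A × B × C weighted by p3
  have e1 : Hent μ (fun ω => (X ω, Z ω)) = - ∑ s, p3 s * Real.logb 2 (p1 s) := by
    rw [Hent_pointwise, ← sum_fiber_weight W (fun s => Real.logb 2 (p1 s))]
  have e2 : Hent μ (fun ω => (Y ω, Z ω)) = - ∑ s, p3 s * Real.logb 2 (p2 s) := by
    rw [Hent_pointwise, ← sum_fiber_weight W (fun s => Real.logb 2 (p2 s))]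
  have e3 : Hent μ W = - ∑ s, p3 s * Real.logb 2 (p3 s) := by
    rw [Hent_pointwise, ← sum_fiber_weight W (fun s => Real.logb 2 (p3 s))]
  have e4 : Hent μ Z = - ∑ s, p3 s * Real.logb 2 (p4 s) := by
    rw [Hent_pointwise, ← sum_fiber_weight W (fun s => Real.logb 2 (p4 s))]
  rw [e1, e2, e3, e4]
  -- comparisons
  have h31 : ∀ s, p3 s ≤ p1 s := fun s =>
    probOf_point_mono h0 _ W (fun s => (s.1, s.2.2)) (fun ω => rfl) s
  have h32 : ∀ s, p3 s ≤ p2 s := fun s =>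
    probOf_point_mono h0 _ W (fun s => (s.2.1, s.2.2)) (fun ω => rfl) s
  have h34 : ∀ s, p3 s ≤ p4 s := fun s =>
    probOf_point_mono h0 _ W (fun s => s.2.2) (fun ω => rfl) s
  have h3n : ∀ s, 0 ≤ p3 s := fun s => probOf_nonneg h0 _ _
  have hlog2 : (0:ℝ) < Real.log 2 := Real.log_pos one_lt_two
  set t : A × B × C → ℝ := fun s => p1 s * p2 s / (p3 s * p4 s) with ht
  -- step 1: key sum bound  ∑ s, p3 s * t s ≤ 1
  have hsum : ∑ s, p3 s * t s ≤ 1 := by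
    have step1 : ∑ s, p3 s * t s ≤ ∑ s : A × B × C, p1 s * p2 s / p4 s := by
      refine Finset.sum_le_sum fun s _ => ?_
      rcases eq_or_lt_of_le (h3n s) with h | h
      · rw [← h, zero_mul]
        exact div_nonneg (mul_nonneg (probOf_nonneg h0 _ _) (probOf_nonneg h0 _ _))
          (probOf_nonneg h0 _ _)
      · rw [ht]
        rw [mul_div_assoc' (p3 s), mul_div_mul_left _ _ (ne_of_gt h)]
    refine le_trans step1 ?_
    have key : ∀ c : C, (∑ a : A, ∑ b : B, p1 (a, b, c) * p2 (a, b, c) / p4 (a, b, c))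
        ≤ probOf μ Z c := by
      intro c
      have : (∑ a : A, ∑ b : B, p1 (a, b, c) * p2 (a, b, c) / p4 (a, b, c))
          = (∑ a : A, probOf μ (fun ω => (X ω, Z ω)) (a, c))
            * (∑ b : B, probOf μ (fun ω => (Y ω, Z ω)) (b, c)) / probOf μ Z c := by
        rw [Finset.sum_mul, Finset.sum_div]
        refine Finset.sum_congr rfl fun a _ => ?_
        rw [Finset.mul_sum, Finset.sum_div]
      rw [this, sum_probOf_fst, sum_probOf_fst]
      rcases eq_or_lt_of_le (probOf_nonneg h0 Z c) with h | h
      · rw [← h]; simp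
      · rw [mul_div_assoc, div_self (ne_of_gt h), mul_one]
    calc ∑ s : A × B × C, p1 s * p2 s / p4 s
        = ∑ a : A, ∑ b : B, ∑ c : C, p1 (a, b, c) * p2 (a, b, c) / p4 (a, b, c) := by
          rw [Fintype.sum_prod_type]
          exact Finset.sum_congr rfl fun a _ => by rw [Fintype.sum_prod_type]
      _ = ∑ a : A, ∑ c : C, ∑ b : B, p1 (a, b, c) * p2 (a, b, c) / p4 (a, b, c) :=
          Finset.sum_congr rfl fun a _ => Finset.sum_comm
      _ = ∑ c : C, ∑ a : A, ∑ b : B, p1 (a, b, c) * p2 (a, b, c) / p4 (a, b, c) :=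
          Finset.sum_comm
      _ ≤ ∑ c : C, probOf μ Z c := Finset.sum_le_sum fun c _ => key c
      _ = 1 := sum_probOf h1 Z
  have hp3sum : ∑ s, p3 s = 1 := sum_probOf h1 W
  -- step 2: termwise log inequality
  have hterm : ∀ s, p3 s * (Real.logb 2 (p1 s) + Real.logb 2 (p2 s))
      ≤ p3 s * (Real.logb 2 (p3 s) + Real.logb 2 (p4 s) + (t s - 1) / Real.log 2) := by
    intro s
    rcases eq_or_lt_of_le (h3n s) with h | h
    · rw [← h]; simp
    · have hP1 : 0 < p1 s := lt_of_lt_of_le h (h31 s)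
      have hP2 : 0 < p2 s := lt_of_lt_of_le h (h32 s)
      have hP4 : 0 < p4 s := lt_of_lt_of_le h (h34 s)
      have hT : 0 < t s := div_pos (mul_pos hP1 hP2) (mul_pos h hP4)
      have hlogt : Real.log (t s) = Real.log (p1 s) + Real.log (p2 s)
          - (Real.log (p3 s) + Real.log (p4 s)) := by
        rw [ht]
        rw [Real.log_div (ne_of_gt (mul_pos hP1 hP2)) (ne_of_gt (mul_pos h hP4)),
          Real.log_mul (ne_of_gt hP1) (ne_of_gt hP2),
          Real.log_mul (ne_of_gt h) (ne_of_gt hP4)]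
      have hle : Real.log (t s) ≤ t s - 1 := Real.log_le_sub_one_of_pos hT
      refine mul_le_mul_of_nonneg_left ?_ h.le
      have : Real.logb 2 (p1 s) + Real.logb 2 (p2 s)
          - (Real.logb 2 (p3 s) + Real.logb 2 (p4 s)) = Real.log (t s) / Real.log 2 := by
        simp only [Real.logb]
        rw [hlogt]
        ring
      have h2 : Real.log (t s) / Real.log 2 ≤ (t s - 1) / Real.log 2 :=
        (div_le_div_iff_of_pos_right hlog2).mpr hle
      linarith [this ▸ h2]
  -- combine
  have final : ∑ s, p3 s * (Real.logb 2 (p1 s) + Real.logb 2 (p2 s))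
      ≤ ∑ s, (p3 s * (Real.logb 2 (p3 s) + Real.logb 2 (p4 s))
          + p3 s * ((t s - 1) / Real.log 2)) :=
    Finset.sum_le_sum fun s _ => le_trans (hterm s) (le_of_eq (by ring))
  rw [Finset.sum_add_distrib] at final
  have hcor : ∑ s, p3 s * ((t s - 1) / Real.log 2) ≤ 0 := by
    have : ∑ s, p3 s * ((t s - 1) / Real.log 2)
        = ((∑ s, p3 s * t s) - (∑ s, p3 s)) / Real.log 2 := by
      rw [← Finset.sum_sub_distrib, Finset.sum_div]
      refine Finset.sum_congr rfl fun s _ => ?_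
      rw [mul_div_assoc']
      ring_nf
    rw [this, hp3sum]
    exact div_nonpos_of_nonpos_of_nonneg (by linarith) hlog2.le
  have expand : ∀ q r : A × B × C → ℝ,
      (- ∑ s, p3 s * Real.logb 2 (q s)) + (- ∑ s, p3 s * Real.logb 2 (r s))
      = - ∑ s, p3 s * (Real.logb 2 (q s) + Real.logb 2 (r s)) := by
    intro q r
    rw [← neg_add, ← Finset.sum_add_distrib]
    congr 1
    exact Finset.sum_congr rfl fun s _ => by ring
  rw [expand p3 p4, expand p1 p2]
  linarith

end Submod

section Abstract

open Finset

/-- Levels `0,…,m` as a finset of `Fin K`. -/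
def Lev (K m : ℕ) : Finset (Fin K) := Finset.univ.filter (fun i => i.1 ≤ m)

lemma mem_Lev {K m : ℕ} {i : Fin K} : i ∈ Lev K m ↔ i.1 ≤ m := by simp [Lev]

lemma Lev_mono {K m m' : ℕ} (h : m ≤ m') : Lev K m ⊆ Lev K m' := by
  intro i hi
  rw [mem_Lev] at *
  omega

/-- Harmonic sum `1 + 1/2 + … + 1/j`. -/
noncomputable def Hsum (j : ℕ) : ℝ := ∑ i ∈ Finset.range j, 1 / ((i : ℝ) + 1)

lemma dimret {K : ℕ} (h : Finset (Fin K × Fin K) → ℝ)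
    (hmono : ∀ P Q, P ⊆ Q → h P ≤ h Q)
    (hsub : ∀ P Q, h (P ∪ Q) + h (P ∩ Q) ≤ h P + h Q)
    (A S S' : Finset (Fin K × Fin K)) (hss : S ⊆ S') :
    h (A ∪ S') + h S ≤ h (A ∪ S) + h S' := by
  have h1 := hsub (A ∪ S) S'
  rw [union_assoc, Finset.union_eq_right.mpr hss] at h1
  have h2 : h S ≤ h ((A ∪ S) ∩ S') :=
    hmono _ _ (Finset.subset_inter Finset.subset_union_right hss)
  linarith

lemma prod_insert_left {K : ℕ} (P : Finset (Fin K)) (k : Fin K) (W : Finset (Fin K)) :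
    P ×ˢ insert k W = P ×ˢ ({k} : Finset (Fin K)) ∪ P ×ˢ W := by
  ext ⟨a, b⟩
  simp only [Finset.mem_union, Finset.mem_product, Finset.mem_insert, Finset.mem_singleton]
  tauto

lemma singleton_prod_insert {K : ℕ} (i k : Fin K) (V : Finset (Fin K)) :
    ({(i, k)} : Finset (Fin K × Fin K)) ∪ ({i} : Finset (Fin K)) ×ˢ V
      = ({i} : Finset (Fin K)) ×ˢ insert k V := by
  ext ⟨a, b⟩
  simp only [Finset.mem_union, Finset.mem_product, Finset.mem_insert, Finset.mem_singleton,
    Prod.mk.injEq]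
  tauto

lemma abstract_bound (K : ℕ) (L : ℝ)
    (h : Finset (Fin K × Fin K) → ℝ)
    (hmono : ∀ P Q, P ⊆ Q → h P ≤ h Q)
    (hsub : ∀ P Q, h (P ∪ Q) + h (P ∩ Q) ≤ h P + h Q)
    (hval : ∀ (i : Fin K) (U : Finset (Fin K)),
      h (({i} : Finset (Fin K)) ×ˢ U) = ((min U.card (i.1 + 1) : ℕ) : ℝ) * L) :
    ∀ m, m < K → ∀ U : Finset (Fin K), U.card = m + 1 →
      h (Lev K m ×ˢ U) + ((m : ℝ) + 1) * (Hsum (m + 1) - 1) * L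
        ≤ ∑ k ∈ U, h (Lev K m ×ˢ ({k} : Finset (Fin K))) := by
  intro m
  induction m with
  | zero =>
    intro _ U hU
    obtain ⟨k, rfl⟩ := Finset.card_eq_one.mp hU
    simp [Hsum]
  | succ m ihm =>
    intro hmK U hU
    have hmK' : m < K := Nat.lt_of_succ_lt hmK
    -- Claim A : telescoping with side conditioning
    have claimA : ∀ W : Finset (Fin K), ∀ C : Finset (Fin K × Fin K),
        h (Lev K (m + 1) ×ˢ W ∪ C) + ∑ k ∈ W, h (Lev K m ×ˢ ({k} : Finset (Fin K)))
          ≤ h (Lev K m ×ˢ W ∪ C)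
            + ∑ k ∈ W, h (Lev K (m + 1) ×ˢ ({k} : Finset (Fin K))) := by
      intro W
      induction W using Finset.induction_on with
      | empty => intro C; simp
      | @insert k W hk ih =>
        intro C
        have hSA : Lev K m ×ˢ ({k} : Finset (Fin K)) ⊆ Lev K (m + 1) ×ˢ ({k} : Finset (Fin K)) :=
          Finset.product_subset_product (Lev_mono (Nat.le_succ m)) (Finset.Subset.refl _)
        have h1 := dimret h hmono hsub (Lev K (m + 1) ×ˢ ({k} : Finset (Fin K)))
          (Lev K m ×ˢ ({k} : Finset (Fin K)))
          (Lev K m ×ˢ ({k} : Finset (Fin K)) ∪ (Lev K (m + 1) ×ˢ W ∪ C))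
          Finset.subset_union_left
        have e2 : Lev K (m + 1) ×ˢ ({k} : Finset (Fin K))
            ∪ (Lev K m ×ˢ ({k} : Finset (Fin K)) ∪ (Lev K (m + 1) ×ˢ W ∪ C))
            = Lev K (m + 1) ×ˢ insert k W ∪ C := by
          rw [← union_assoc, Finset.union_eq_left.mpr hSA, prod_insert_left, union_assoc]
        have e3 : Lev K (m + 1) ×ˢ ({k} : Finset (Fin K)) ∪ Lev K m ×ˢ ({k} : Finset (Fin K))
            = Lev K (m + 1) ×ˢ ({k} : Finset (Fin K)) := Finset.union_eq_left.mpr hSA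
        have e4 : Lev K m ×ˢ ({k} : Finset (Fin K)) ∪ (Lev K (m + 1) ×ˢ W ∪ C)
            = Lev K (m + 1) ×ˢ W ∪ (C ∪ Lev K m ×ˢ ({k} : Finset (Fin K))) := by ac_rfl
        have e5 : Lev K m ×ˢ W ∪ (C ∪ Lev K m ×ˢ ({k} : Finset (Fin K)))
            = Lev K m ×ˢ insert k W ∪ C := by
          rw [prod_insert_left]
          ac_rfl
        rw [e2, e3, e4] at h1
        have h2 := ih (C ∪ Lev K m ×ˢ ({k} : Finset (Fin K)))
        rw [e5] at h2
        rw [Finset.sum_insert hk, Finset.sum_insert hk]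
        linarith
    -- Claim B : at the lower level, one user is redundant
    have claimB : ∀ k ∈ U, h (Lev K m ×ˢ U) ≤ h (Lev K m ×ˢ U.erase k) := by
      intro k hkU
      have hVcard : (U.erase k).card = m + 1 := by
        rw [Finset.card_erase_of_mem hkU, hU]
        omega
      have hkV : k ∉ U.erase k := Finset.notMem_erase k U
      have subB : ∀ E : Finset (Fin K), E ⊆ Lev K m →
          h (E ×ˢ ({k} : Finset (Fin K)) ∪ Lev K m ×ˢ U.erase k)
            ≤ h (Lev K m ×ˢ U.erase k) := by
        intro E
        induction E using Finset.induction_on with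
        | empty => intro _; simp
        | @insert i E hi ih =>
          intro hins
          have hiLev : i ∈ Lev K m := hins (Finset.mem_insert_self i E)
          have hELev : E ⊆ Lev K m := fun x hx => hins (Finset.mem_insert_of_mem hx)
          have him : i.1 ≤ m := mem_Lev.mp hiLev
          have hSX : ({i} : Finset (Fin K)) ×ˢ U.erase k
              ⊆ E ×ˢ ({k} : Finset (Fin K)) ∪ Lev K m ×ˢ U.erase k :=
            Finset.Subset.trans
              (Finset.product_subset_product (Finset.singleton_subset_iff.mpr hiLev)
                (Finset.Subset.refl _)) Finset.subset_union_right
          have h1 := dimret h hmono hsub ({(i, k)} : Finset (Fin K × Fin K))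
            (({i} : Finset (Fin K)) ×ˢ U.erase k)
            (({i} : Finset (Fin K)) ×ˢ U.erase k
              ∪ (E ×ˢ ({k} : Finset (Fin K)) ∪ Lev K m ×ˢ U.erase k))
            Finset.subset_union_left
          have e2 : ({(i, k)} : Finset (Fin K × Fin K))
              ∪ (({i} : Finset (Fin K)) ×ˢ U.erase k
                ∪ (E ×ˢ ({k} : Finset (Fin K)) ∪ Lev K m ×ˢ U.erase k))
              = insert i E ×ˢ ({k} : Finset (Fin K)) ∪ Lev K m ×ˢ U.erase k := by
            rw [Finset.union_eq_right.mpr hSX, ← union_assoc]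
            congr 1
            ext ⟨a, b⟩
            simp only [Finset.mem_union, Finset.mem_product, Finset.mem_insert,
              Finset.mem_singleton, Prod.mk.injEq]
            tauto
          have e3 : h (({(i, k)} : Finset (Fin K × Fin K))
                ∪ ({i} : Finset (Fin K)) ×ˢ U.erase k)
              = h (({i} : Finset (Fin K)) ×ˢ U.erase k) := by
            rw [singleton_prod_insert, hval, hval]
            have c1 : (insert k (U.erase k)).card = m + 2 := by
              rw [Finset.card_insert_of_notMem hkV, hVcard]
            rw [c1, hVcard]
            have cmin : min (m + 2) (i.1 + 1) = min (m + 1) (i.1 + 1) := by omega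
            rw [cmin]
          have e4 : (({i} : Finset (Fin K)) ×ˢ U.erase k
                ∪ (E ×ˢ ({k} : Finset (Fin K)) ∪ Lev K m ×ˢ U.erase k))
              = E ×ˢ ({k} : Finset (Fin K)) ∪ Lev K m ×ˢ U.erase k :=
            Finset.union_eq_right.mpr hSX
          rw [e2, e3, e4] at h1
          have h2 := ih hELev
          linarith
      have hsplit : Lev K m ×ˢ U
          = Lev K m ×ˢ ({k} : Finset (Fin K)) ∪ Lev K m ×ˢ U.erase k := by
        rw [← prod_insert_left, Finset.insert_erase hkU]
      rw [hsplit]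
      exact subB (Lev K m) (Finset.Subset.refl _)
    -- averaging over erased subsets using the induction hypothesis
    have per : ∀ k' ∈ U, h (Lev K m ×ˢ U) + ((m : ℝ) + 1) * (Hsum (m + 1) - 1) * L
        ≤ (∑ k ∈ U, h (Lev K m ×ˢ ({k} : Finset (Fin K))))
          - h (Lev K m ×ˢ ({k'} : Finset (Fin K))) := by
      intro k' hk'
      have hVcard : (U.erase k').card = m + 1 := by
        rw [Finset.card_erase_of_mem hk', hU]
        omega
      have hih := ihm hmK' (U.erase k') hVcard
      rw [Finset.sum_erase_eq_sub hk'] at hih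
      have hcb := claimB k' hk'
      linarith
    have havg : ((m : ℝ) + 2) * (h (Lev K m ×ˢ U) + ((m : ℝ) + 1) * (Hsum (m + 1) - 1) * L)
        ≤ ((m : ℝ) + 1) * ∑ k ∈ U, h (Lev K m ×ˢ ({k} : Finset (Fin K))) := by
      have hs := Finset.sum_le_sum per
      rw [Finset.sum_const, Finset.sum_sub_distrib, Finset.sum_const, hU,
        nsmul_eq_mul, nsmul_eq_mul] at hs
      push_cast at hs
      linarith
    -- claim A with no conditioning
    have hA0 := claimA U ∅
    rw [Finset.union_empty, Finset.union_empty] at hA0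
    -- floor for the lower-level joint entropy
    have hfloor : ((m : ℝ) + 1) * L ≤ h (Lev K m ×ˢ U) := by
      have hmem : (⟨m, hmK'⟩ : Fin K) ∈ Lev K m := mem_Lev.mpr (le_refl m)
      have hsub2 : ({(⟨m, hmK'⟩ : Fin K)} : Finset (Fin K)) ×ˢ U ⊆ Lev K m ×ˢ U :=
        Finset.product_subset_product (Finset.singleton_subset_iff.mpr hmem)
          (Finset.Subset.refl _)
      have hm2 := hmono _ _ hsub2
      rw [hval, hU] at hm2
      have hmin : min (m + 1 + 1) ((⟨m, hmK'⟩ : Fin K).1 + 1) = m + 1 := by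
        show min (m + 1 + 1) (m + 1) = m + 1
        omega
      rw [hmin] at hm2
      push_cast at hm2 ⊢
      linarith
    -- harmonic recursion
    have hH2 : ((m : ℝ) + 1 + 1) * (Hsum (m + 1 + 1) - 1) * L
        = ((m : ℝ) + 2) * ((Hsum (m + 1) - 1) * L) + L := by
      rw [Hsum, Finset.sum_range_succ, ← Hsum]
      push_cast
      have hne : ((m : ℝ) + 2) ≠ 0 := by positivity
      field_simp
      ring
    -- final linear arithmetic
    have hapos : (0 : ℝ) < (m : ℝ) + 1 := by positivity
    have H1 : ((m : ℝ) + 1) * (h (Lev K (m + 1) ×ˢ U)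
          + ∑ k ∈ U, h (Lev K m ×ˢ ({k} : Finset (Fin K))))
        ≤ ((m : ℝ) + 1) * (h (Lev K m ×ˢ U)
          + ∑ k ∈ U, h (Lev K (m + 1) ×ˢ ({k} : Finset (Fin K)))) :=
      mul_le_mul_of_nonneg_left (by linarith) hapos.le
    have hgoal : ((m : ℝ) + 1) * (h (Lev K (m + 1) ×ˢ U)
          + (((m : ℝ) + 2) * ((Hsum (m + 1) - 1) * L) + L))
        ≤ ((m : ℝ) + 1) * ∑ k ∈ U, h (Lev K (m + 1) ×ˢ ({k} : Finset (Fin K))) := by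
      nlinarith [H1, havg, hfloor]
    have hfin := (mul_le_mul_iff_right₀ hapos).mp hgoal
    push_cast
    linarith

end Abstract

section Instantiate

/-- The joint random variable collecting `ZM i k` for `(i,k)` in a finset of pairs. -/
def XP {Ω T : Type*} {K : ℕ} (ZM : Fin K → Fin K → Ω → T)
    (P : Finset (Fin K × Fin K)) : Ω → (↥P → T) :=
  fun ω p => ZM p.1.1 p.1.2 ω

variable {Ω T : Type} [Fintype Ω] [Fintype T] {K : ℕ} {μ : Ω → ℝ}
  (ZM : Fin K → Fin K → Ω → T)

lemma XP_mono (h0 : ∀ ω, 0 ≤ μ ω) {P Q : Finset (Fin K × Fin K)} (hPQ : P ⊆ Q) :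
    Hent μ (XP ZM P) ≤ Hent μ (XP ZM Q) :=
  Hent_le_of_comap h0 _ _ (fun v p => v ⟨p.1, hPQ p.2⟩) (fun _ => rfl)

lemma XP_submod (h0 : ∀ ω, 0 ≤ μ ω) (h1 : (∑ ω, μ ω) = 1)
    (P Q : Finset (Fin K × Fin K)) :
    Hent μ (XP ZM (P ∪ Q)) + Hent μ (XP ZM (P ∩ Q))
      ≤ Hent μ (XP ZM P) + Hent μ (XP ZM Q) := by
  classical
  have key := Hent_submod h0 h1 (XP ZM P) (XP ZM Q) (XP ZM (P ∩ Q))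
  have e1 : Hent μ (fun ω => (XP ZM P ω, XP ZM Q ω, XP ZM (P ∩ Q) ω))
      = Hent μ (XP ZM (P ∪ Q)) := by
    refine Hent_congr h0 _ _
      (fun v => (fun p => v ⟨p.1, Finset.mem_union_left _ p.2⟩,
        fun q => v ⟨q.1, Finset.mem_union_right _ q.2⟩,
        fun r => v ⟨r.1, Finset.mem_union_left _ (Finset.mem_of_mem_inter_left r.2)⟩))
      (fun w q => if hq : q.1 ∈ P then w.1 ⟨q.1, hq⟩
        else w.2.1 ⟨q.1, (Finset.mem_union.mp q.2).resolve_left hq⟩)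
      (fun ω => rfl) ?_
    intro ω
    funext q
    by_cases hq : q.1 ∈ P <;> simp [XP, hq]
  have e2 : Hent μ (fun ω => (XP ZM P ω, XP ZM (P ∩ Q) ω)) = Hent μ (XP ZM P) :=
    Hent_congr h0 _ _
      (fun v => (v, fun r => v ⟨r.1, Finset.mem_of_mem_inter_left r.2⟩))
      Prod.fst (fun _ => rfl) (fun _ => rfl)
  have e3 : Hent μ (fun ω => (XP ZM Q ω, XP ZM (P ∩ Q) ω)) = Hent μ (XP ZM Q) :=
    Hent_congr h0 _ _
      (fun v => (v, fun r => v ⟨r.1, Finset.mem_of_mem_inter_right r.2⟩))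
      Prod.fst (fun _ => rfl) (fun _ => rfl)
  rw [e1, e2, e3] at key
  exact key

lemma XP_singleton_level (h0 : ∀ ω, 0 ≤ μ ω) (i : Fin K) (U : Finset (Fin K)) :
    Hent μ (XP ZM (({i} : Finset (Fin K)) ×ˢ U))
      = Hent μ (fun ω (u : ↥U) => ZM i u.1 ω) := by
  refine Hent_congr h0 _ _
    (fun v p => v ⟨p.1.2, (Finset.mem_product.mp p.2).2⟩)
    (fun w u => w ⟨(i, u.1), Finset.mem_product.mpr ⟨Finset.mem_singleton_self i, u.2⟩⟩)
    ?_ (fun _ => rfl)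
  intro ω
  funext p
  show ZM p.1.1 p.1.2 ω = ZM i p.1.2 ω
  have hi : p.1.1 = i := Finset.mem_singleton.mp (Finset.mem_product.mp p.2).1
  rw [hi]

lemma XP_Zle (h0 : ∀ ω, 0 ≤ μ ω) (n k : Fin K) :
    Hent μ (Zle ZM n k)
      = Hent μ (XP ZM (Lev K n.1 ×ˢ ({k} : Finset (Fin K)))) := by
  refine Hent_congr h0 _ _
    (fun w m => w ⟨(Fin.castLE n.isLt m, k),
      Finset.mem_product.mpr ⟨mem_Lev.mpr (Nat.lt_succ_iff.mp m.isLt),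
        Finset.mem_singleton_self k⟩⟩)
    (fun v p => v ⟨p.1.1.1,
      Nat.lt_succ_of_le (mem_Lev.mp (Finset.mem_product.mp p.2).1)⟩)
    (fun _ => rfl) ?_
  intro ω
  funext p
  show ZM p.1.1 p.1.2 ω
    = ZM (Fin.castLE n.isLt ⟨p.1.1.1, _⟩) k ω
  have h2 : p.1.2 = k := Finset.mem_singleton.mp (Finset.mem_product.mp p.2).2
  have h3 : Fin.castLE n.isLt
      (⟨p.1.1.1, Nat.lt_succ_of_le (mem_Lev.mp (Finset.mem_product.mp p.2).1)⟩
        : Fin (n.1 + 1)) = p.1.1 := by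
    apply Fin.ext
    rfl
  rw [h3, h2]

end Instantiate


/-- Lemma 3: for MDS variables, for every `n` and every `U ⊆ [K]` with `|U| = n`,
(1/n) Σ_{k∈U} H(Z_k^{≤n}) ≥ (1 + 1/2 + ⋯ + 1/n)·L. -/
theorem mds_recursive_entropy_bound
    (K : ℕ) (hK : 1 ≤ K) (L : ℝ) (hL : 0 < L)
    (Ω : Type) [Fintype Ω] (μ : Ω → ℝ)
    (hμ0 : ∀ ω, 0 ≤ μ ω) (hμ1 : (∑ ω, μ ω) = 1)
    (T : Type) [Fintype T]
    (ZM : Fin K → Fin K → Ω → T)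
    -- for every n, (Z_1^n, …, Z_K^n) is (K,n)-MDS with symbol size L
    (hMDS : ∀ (n : Fin K) (U : Finset (Fin K)),
      Hent μ (fun ω (u : ↥U) => ZM n u.1 ω) = (min U.card (n.1 + 1) : ℕ) * L) :
    ∀ (n : Fin K) (U : Finset (Fin K)), U.card = n.1 + 1 →
      (1 / ((n.1 : ℝ) + 1)) * ∑ k ∈ U, Hent μ (Zle ZM n k)
        ≥ (∑ i ∈ Finset.range (n.1 + 1), 1 / ((i : ℝ) + 1)) * L := by
  
  intro n U hU
  have hval : ∀ (i : Fin K) (V : Finset (Fin K)),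
      Hent μ (XP ZM (({i} : Finset (Fin K)) ×ˢ V))
        = ((min V.card (i.1 + 1) : ℕ) : ℝ) * L := by
    intro i V
    rw [XP_singleton_level ZM hμ0, hMDS]
  have habs := abstract_bound K L (fun P => Hent μ (XP ZM P))
    (fun P Q hPQ => XP_mono ZM hμ0 hPQ)
    (fun P Q => XP_submod ZM hμ0 hμ1 P Q)
    hval n.1 n.isLt U hU
  have hsumeq : ∑ k ∈ U, Hent μ (Zle ZM n k)
      = ∑ k ∈ U, Hent μ (XP ZM (Lev K n.1 ×ˢ ({k} : Finset (Fin K)))) :=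
    Finset.sum_congr rfl fun k _ => XP_Zle ZM hμ0 n k
  have hfloor : ((n.1 : ℝ) + 1) * L ≤ Hent μ (XP ZM (Lev K n.1 ×ˢ U)) := by
    have hmem : n ∈ Lev K n.1 := mem_Lev.mpr (le_refl _)
    have hm2 := XP_mono (μ := μ) ZM hμ0
      (Finset.product_subset_product (Finset.singleton_subset_iff.mpr hmem)
        (Finset.Subset.refl U))
    rw [hval n U, hU] at hm2
    have hmin : min (n.1 + 1) (n.1 + 1) = n.1 + 1 := min_self _
    rw [hmin] at hm2
    push_cast at hm2 ⊢
    linarith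
  have hpos : (0 : ℝ) < (n.1 : ℝ) + 1 := by positivity
  have hHs : (∑ i ∈ Finset.range (n.1 + 1), 1 / ((i : ℝ) + 1)) = Hsum (n.1 + 1) := rfl
  rw [ge_iff_le, hHs, hsumeq, one_div_mul_eq_div, le_div_iff₀ hpos]
  nlinarith [habs, hfloor]
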